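/- For every real x and all integers k, l ≥ 0 with (k,l) ≠ (0,0): (1/2)·(f_k·h_l + h_k·f_l) = (−1)^{k+l−1}·(V_{k−1,l} + V_{k,l−1}), where V_{k,l} := ∑_{n=0}^{k} (−1)ⁿ·A_{l+n+1, k−n} for k, l ≥ 0 and V_{k,l} := 0 if k = −1 or l = −1. (This is the coefficient formula V^{++}_{kl} = ∑_{n=0}^{k}(−1)ⁿ A_{l+n+1,k−n} in the expansion of V^{++}(z,w).) -/

import Mathlib

/-- `α₀ = 1` and, for `n ≥ 1`, `αₙ = ((-1)ⁿ/(8ⁿ·n!))·∏_{ℓ=1}^{n}(2ℓ-1)²`. -/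
noncomputable def alph (n : ℕ) : ℝ :=
  ((-1) ^ n / (8 ^ n * Nat.factorial n)) * ∏ ℓ ∈ Finset.range n, ((2 * (ℓ : ℝ) + 1)) ^ 2

/-- `f₀ = 1` and `fₙ = (−1)ⁿ·αₙ·xⁿ`. -/
noncomputable def fSeq (x : ℝ) (n : ℕ) : ℝ := (-1) ^ n * alph n * x ^ n

/-- `h₀ = 1` and `hₙ = −(−1)ⁿ·((2n+1)/(2n−1))·αₙ·xⁿ`. -/
noncomputable def hSeq (x : ℝ) (n : ℕ) : ℝ :=
  -((-1) ^ n * ((2 * (n : ℝ) + 1) / (2 * (n : ℝ) - 1)) * alph n * x ^ n)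

/-- `A_{p,q} = ((4pq−1)/((2p−1)(2q−1)))·α_p·α_q·x^{p+q}` for `p, q ≥ 0`. -/
noncomputable def Acoef (x : ℝ) (p q : ℕ) : ℝ :=
  ((4 * (p : ℝ) * (q : ℝ) - 1) / ((2 * (p : ℝ) - 1) * (2 * (q : ℝ) - 1))) *
    alph p * alph q * x ^ (p + q)

/-- `V_{k,l} = ∑_{n=0}^k (−1)ⁿ·A_{l+n+1,k−n}` for `k, l ≥ 0`; `V_{k,l} = 0`
if `k = −1` or `l = −1`. -/
noncomputable def Vcoef (x : ℝ) (k l : ℤ) : ℝ :=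
  if k < 0 ∨ l < 0 then 0
  else ∑ n ∈ Finset.range (k.toNat + 1), (-1 : ℝ) ^ n * Acoef x (l.toNat + n + 1) (k.toNat - n)

lemma alph_zero : alph 0 = 1 := by simp [alph]

lemma hne (n : ℕ) : (2 * (n : ℝ) - 1) ≠ 0 := by
  rcases n with _ | m
  · norm_num
  · push_cast
    intro h
    have : (0:ℝ) ≤ (m:ℝ) := Nat.cast_nonneg m
    linarith

lemma alph_succ (n : ℕ) : alph (n+1) = -((2*(n:ℝ)+1)^2/(8*((n:ℝ)+1))) * alph n := by
  have h1 : ((8:ℝ))^n ≠ 0 := by positivity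
  have h2 : ((Nat.factorial n : ℕ) : ℝ) ≠ 0 := by
    exact_mod_cast Nat.factorial_ne_zero n
  have h3 : ((n:ℝ)+1) ≠ 0 := by positivity
  rw [alph, alph, Finset.prod_range_succ, pow_succ, pow_succ, Nat.factorial_succ]
  push_cast
  field_simp

noncomputable def Gaux (x : ℝ) (k m : ℕ) : ℝ :=
  (-1:ℝ)^m * (-(m:ℝ)*(2*((k:ℝ)-(m:ℝ))+1)/((k:ℝ)*(2*(m:ℝ)-1))) * alph m * alph (k-m) * x^k

lemma Gaux_zero (x : ℝ) (k : ℕ) : Gaux x k 0 = 0 := by simp [Gaux]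

lemma tele (x : ℝ) (k m : ℕ) (h : m < k) :
    (-1:ℝ)^m * Acoef x m (k-m) = Gaux x k (m+1) - Gaux x k m := by
  obtain ⟨j, rfl⟩ : ∃ j, k = m + j + 1 := ⟨k - m - 1, by omega⟩
  have h1 : m + j + 1 - m = j + 1 := by omega
  have h2 : m + j + 1 - (m+1) = j := by omega
  rw [Gaux, Gaux, Acoef, h1, h2, alph_succ, alph_succ]
  have hm := hne m
  have hm1 := hne (m+1)
  have hj1 := hne (j+1)
  have e1 : ((m:ℝ)+(j:ℝ)+1) ≠ 0 := by positivity
  have e2 : ((m:ℝ)+1) ≠ 0 := by positivity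
  have e3 : ((j:ℝ)+1) ≠ 0 := by positivity
  push_cast
  push_cast at hm hm1 hj1
  have hm' : (m:ℝ)*2-1 ≠ 0 := by intro h; exact hm (by linarith)
  have hj' : ((j:ℝ)+1)*2-1 ≠ 0 := by intro h; exact hj1 (by linarith)
  field_simp
  ring

lemma Ssum (x : ℝ) (k : ℕ) (hk : 1 ≤ k) :
    ∑ m ∈ Finset.range (k+1), (-1:ℝ)^m * Acoef x m (k-m) = 0 := by
  rw [Finset.sum_range_succ]
  have h1 : ∑ m ∈ Finset.range k, (-1:ℝ)^m * Acoef x m (k-m)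
      = Gaux x k k - Gaux x k 0 := by
    rw [← Finset.sum_range_sub (fun m => Gaux x k m)]
    exact Finset.sum_congr rfl fun m hm => tele x k m (Finset.mem_range.mp hm)
  have h2 : (-1:ℝ)^k * Acoef x k (k-k) = - Gaux x k k := by
    rw [Nat.sub_self, Acoef, Gaux, Nat.sub_self, alph_zero]
    have := hne k
    have hk0 : ((k:ℝ)) ≠ 0 := by
      have : (1:ℝ) ≤ (k:ℝ) := by exact_mod_cast hk
      linarith
    have hk0' : (1 - 2*(k:ℝ)) ≠ 0 := by
      intro h; exact this (by linarith)
    push_cast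
    field_simp
    ring
  rw [h1, h2, Gaux_zero]
  ring

lemma V_neg (x : ℝ) (l : ℤ) : Vcoef x (-1) l = 0 := by
  rw [Vcoef, if_pos]
  left; norm_num

lemma V_neg' (x : ℝ) (k : ℤ) : Vcoef x k (-1) = 0 := by
  rw [Vcoef, if_pos]
  right; norm_num

lemma V_nat (x : ℝ) (k l : ℕ) : Vcoef x (k:ℤ) (l:ℤ)
    = ∑ n ∈ Finset.range (k+1), (-1:ℝ)^n * Acoef x (l+n+1) (k-n) := by
  rw [Vcoef, if_neg (by omega)]
  simp

lemma caseA (x : ℝ) (L : ℕ) :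
    (1/2 : ℝ)*(fSeq x 0 * hSeq x (L+1) + hSeq x 0 * fSeq x (L+1))
      = (-1:ℝ)^L * Acoef x (L+1) 0 := by
  have h1 := hne (L+1)
  push_cast at h1
  have h1' : (-1 - (L:ℝ)*2) ≠ 0 := by intro h; exact h1 (by linarith)
  simp only [fSeq, hSeq, Acoef, alph_zero]
  push_cast
  field_simp
  have h2 : (1 - 2*((L:ℝ)+1)) ≠ 0 := by intro h; exact h1 (by linarith)
  apply mul_right_cancel₀ h2
  field_simp
  ring

lemma caseB (x : ℝ) (K : ℕ) :
    (1/2 : ℝ)*(fSeq x (K+1) * hSeq x 0 + hSeq x (K+1) * fSeq x 0)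
      = (-1:ℝ)^K * ∑ n ∈ Finset.range (K+1), (-1:ℝ)^n * Acoef x (n+1) (K-n) := by
  have hs := Ssum x (K+1) (by omega)
  rw [Finset.sum_range_succ'] at hs
  simp only [Nat.succ_sub_succ, Nat.sub_zero, pow_zero, one_mul] at hs
  have h2 : (∑ i ∈ Finset.range (K+1), (-1:ℝ)^(i+1) * Acoef x (i+1) (K-i))
      = - ∑ n ∈ Finset.range (K+1), (-1:ℝ)^n * Acoef x (n+1) (K-n) := by
    rw [← Finset.sum_neg_distrib]
    exact Finset.sum_congr rfl fun i _ => by ring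
  have key : ∑ n ∈ Finset.range (K+1), (-1:ℝ)^n * Acoef x (n+1) (K-n)
      = Acoef x 0 (K+1) := by
    rw [h2] at hs
    linarith
  rw [key]
  have h1 := hne (K+1)
  push_cast at h1
  have h1' : (-1 - (K:ℝ)*2) ≠ 0 := by intro h; exact h1 (by linarith)
  simp only [fSeq, hSeq, Acoef, alph_zero]
  push_cast
  field_simp
  have h2 : (1 - 2*((K:ℝ)+1)) ≠ 0 := by intro h; exact h1 (by linarith)
  apply mul_right_cancel₀ h2
  field_simp
  ring

lemma caseC (x : ℝ) (K L : ℕ) :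
    (1/2 : ℝ)*(fSeq x (K+1) * hSeq x (L+1) + hSeq x (K+1) * fSeq x (L+1))
      = (-1:ℝ)^(K+L+1) * Acoef x (L+1) (K+1) := by
  have h1 := hne (K+1)
  have h2 := hne (L+1)
  simp only [fSeq, hSeq, Acoef]
  push_cast
  push_cast at h1 h2
  field_simp
  ring

/-- Coefficient formula `V^{++}_{kl} = ∑_{n=0}^{k}(−1)ⁿ A_{l+n+1,k−n}` in the
expansion of `V^{++}(z,w)`: for all `k, l ≥ 0` with `(k,l) ≠ (0,0)`,
`(1/2)·(f_k·h_l + h_k·f_l) = (−1)^{k+l−1}·(V_{k−1,l} + V_{k,l−1})`. -/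
theorem stmt13 (x : ℝ) (k l : ℕ) (hkl : (k, l) ≠ (0, 0)) :
    (1 / 2 : ℝ) * (fSeq x k * hSeq x l + hSeq x k * fSeq x l) =
      (-1 : ℝ) ^ (k + l - 1) * (Vcoef x ((k : ℤ) - 1) l + Vcoef x k ((l : ℤ) - 1)) := by
  rcases k with _ | K <;> rcases l with _ | L
  · exact absurd rfl hkl
  · -- k = 0, l = L+1
    have e1 : ((0:ℕ):ℤ) - 1 = -1 := by norm_num
    have e2 : ((L+1:ℕ):ℤ) - 1 = ((L:ℕ):ℤ) := by push_cast; ring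
    rw [e1, e2, V_neg, V_nat]
    have e3 : 0 + (L+1) - 1 = L := by omega
    rw [e3]
    simp only [Finset.sum_range_one, pow_zero, one_mul, Nat.sub_self, zero_add,
      Nat.add_zero, Nat.zero_sub]
    simpa using caseA x L
  · -- k = K+1, l = 0
    have e1 : ((K+1:ℕ):ℤ) - 1 = ((K:ℕ):ℤ) := by push_cast; ring
    have e2 : ((0:ℕ):ℤ) - 1 = -1 := by norm_num
    rw [e1, e2, V_neg', V_nat]
    have e3 : (K+1) + 0 - 1 = K := by omega
    rw [e3]
    simp only [Nat.zero_add, add_zero]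
    simpa using caseB x K
  · -- k = K+1, l = L+1
    have e1 : ((K+1:ℕ):ℤ) - 1 = ((K:ℕ):ℤ) := by push_cast; ring
    have e2 : ((L+1:ℕ):ℤ) - 1 = ((L:ℕ):ℤ) := by push_cast; ring
    rw [e1, e2, V_nat, V_nat]
    have e3 : (K+1) + (L+1) - 1 = K+L+1 := by omega
    rw [e3]
    have htel : (∑ n ∈ Finset.range (K+1), (-1:ℝ)^n * Acoef x ((L+1)+n+1) (K-n))
        + ∑ n ∈ Finset.range ((K+1)+1), (-1:ℝ)^n * Acoef x (L+n+1) ((K+1)-n)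
        = Acoef x (L+1) (K+1) := by
      have hb : ∀ i, (-1:ℝ)^(i+1) * Acoef x (L+(i+1)+1) ((K+1)-(i+1))
          = -((-1:ℝ)^i * Acoef x ((L+1)+i+1) (K-i)) := by
        intro i
        have hi1 : L+(i+1)+1 = (L+1)+i+1 := by omega
        have hi2 : (K+1)-(i+1) = K-i := by omega
        rw [hi1, hi2]
        ring
      have hsecond : ∑ n ∈ Finset.range ((K+1)+1), (-1:ℝ)^n * Acoef x (L+n+1) ((K+1)-n)
          = (- ∑ i ∈ Finset.range (K+1), (-1:ℝ)^i * Acoef x ((L+1)+i+1) (K-i))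
            + Acoef x (L+1) (K+1) := by
        rw [Finset.sum_range_succ']
        congr 1
        · rw [← Finset.sum_neg_distrib]
          exact Finset.sum_congr rfl fun i _ => hb i
        · simp only [pow_zero, one_mul, Nat.add_zero, Nat.sub_zero]
      rw [hsecond]
      ring
    rw [htel]
    exact caseC x K L
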